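/- For every natural number d and every natural number k with d(d+1)/2 ≤ k ≤ d(d+3)/2, one has c_k(1,1) = d. Consequently the sequence (c_k(1,1))_{k≥0} is 0, 1, 1, 2, 2, 2, 3, 3, 3, 3, …, each integer d occurring exactly d+1 times. (These are the ECH capacities of the ball B_4(1).) -/

import Mathlib

/-- `latN a b T` is the number of lattice points `(x,y) ∈ ℕ × ℕ` with `a·x + b·y ≤ T`
(a finite set when `a, b > 0`). -/
noncomputable def latN (a b T : ℝ) : ℕ :=
  Set.ncard {p : ℕ × ℕ | a * p.1 + b * p.2 ≤ T}

/-- `ck a b k` is the `(k+1)`-st smallest element, counted with multiplicity, of the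
collection `{a·m + b·n : (m,n) ∈ ℕ × ℕ}`; these are the ECH capacities of the ellipsoid
`E(a,b)`. -/
noncomputable def ck (a b : ℝ) (k : ℕ) : ℝ :=
  sInf {T : ℝ | 0 ≤ T ∧ k + 1 ≤ latN a b T}

lemma latSet_eq (n : ℕ) :
    {p : ℕ × ℕ | (1:ℝ) * p.1 + 1 * p.2 ≤ (n:ℝ)} =
      ↑((Finset.range (n+1)).biUnion Finset.HasAntidiagonal.antidiagonal) := by
  ext p
  simp only [Set.mem_setOf_eq, Finset.coe_biUnion, Set.mem_iUnion, Finset.mem_coe,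
    Finset.mem_range, Finset.HasAntidiagonal.mem_antidiagonal]
  constructor
  · intro h
    refine ⟨p.1 + p.2, ?_, rfl⟩
    have : ((p.1 + p.2 : ℕ) : ℝ) ≤ (n:ℝ) := by push_cast at h ⊢; linarith
    exact Nat.lt_succ_of_le (by exact_mod_cast this)
  · rintro ⟨m, hm, hs⟩
    have : p.1 + p.2 ≤ n := by omega
    have : ((p.1 + p.2 : ℕ) : ℝ) ≤ (n:ℝ) := by exact_mod_cast this
    push_cast at this ⊢; linarith

lemma sum_twice (n : ℕ) : 2 * ∑ m ∈ Finset.range (n+1), (m+1) = (n+1)*(n+2) := by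
  induction n with
  | zero => simp
  | succ n ih => rw [Finset.sum_range_succ, Nat.mul_add, ih]; ring

lemma latN_nat (n : ℕ) : latN 1 1 (n : ℝ) = (n+1)*(n+2)/2 := by
  rw [latN, latSet_eq, Set.ncard_coe_finset,
    Finset.card_biUnion (fun i _ j _ hij => by
      rw [Function.onFun, Finset.disjoint_left]; intro p hp hq
      rw [Finset.HasAntidiagonal.mem_antidiagonal] at hp hq; omega)]
  simp only [Finset.Nat.card_antidiagonal]
  have := sum_twice n
  omega

/-- The ECH capacities of the ball `B_4(1)`: for every `d` and every `k` with
`d(d+1)/2 ≤ k ≤ d(d+3)/2` one has `c_k(1,1) = d`.  Hence the sequence `(c_k(1,1))` is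
`0, 1, 1, 2, 2, 2, 3, 3, 3, 3, …`, each integer `d` occurring exactly `d+1` times. -/
theorem ball_capacities (d k : ℕ) (h1 : d * (d + 1) / 2 ≤ k) (h2 : k ≤ d * (d + 3) / 2) :
    ck 1 1 k = (d : ℝ) := by
  have hdmem : (d:ℝ) ∈ {T : ℝ | 0 ≤ T ∧ k + 1 ≤ latN 1 1 T} := by
    refine ⟨by positivity, ?_⟩
    rw [latN_nat]
    have hdvd : 2 ∣ d * (d + 1) := (Nat.even_mul_succ_self d).two_dvd
    obtain ⟨e, he⟩ := hdvd
    have hB : d * (d + 3) = 2 * e + 2 * d := by rw [← he]; ring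
    have hC : (d + 1) * (d + 2) = 2 * e + 2 * d + 2 := by rw [← hB]; ring
    rw [hB] at h2
    rw [hC]
    omega
  refine le_antisymm (csInf_le ⟨0, fun T hT => hT.1⟩ hdmem) ?_
  refine le_csInf ⟨_, hdmem⟩ ?_
  rintro T ⟨hT0, hTk⟩
  by_contra hlt
  push_neg at hlt
  have hd1 : 1 ≤ d := by
    by_contra h
    interval_cases d
    · simp at hlt; linarith
  have hsub : {p : ℕ × ℕ | (1:ℝ) * p.1 + 1 * p.2 ≤ T} ⊆
      {p : ℕ × ℕ | (1:ℝ) * p.1 + 1 * p.2 ≤ ((d-1 : ℕ):ℝ)} := by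
    intro p hp
    simp only [Set.mem_setOf_eq] at hp ⊢
    have h1' : ((p.1 + p.2 : ℕ) : ℝ) < (d:ℝ) := by push_cast at hp ⊢; linarith
    have h2' : p.1 + p.2 < d := by exact_mod_cast h1'
    have : p.1 + p.2 ≤ d - 1 := by omega
    have : ((p.1 + p.2 : ℕ) : ℝ) ≤ ((d-1:ℕ):ℝ) := by exact_mod_cast this
    push_cast at this ⊢; linarith
  have hfin : {p : ℕ × ℕ | (1:ℝ) * p.1 + 1 * p.2 ≤ ((d-1 : ℕ):ℝ)}.Finite := by
    rw [latSet_eq]; exact (Finset.finite_toSet _)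
  have hle : latN 1 1 T ≤ latN 1 1 ((d-1:ℕ):ℝ) := Set.ncard_le_ncard hsub hfin
  rw [latN_nat] at hle
  have hd1' : (d - 1 + 1) = d := by omega
  have hd2' : (d - 1 + 2) = d + 1 := by omega
  rw [hd1', hd2'] at hle
  omega
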